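/- Let N ≥ 2 and y ∈ ℂ^N, η ∈ ℂ. If sin(y_j) ≠ 0 for all j (equivalently F_D(y) ≠ 0), then the kernel of the secular matrix A(y,η) has dimension at most 1. -/

import Mathlib

open Complex Finset

/-- If `sin(y_j) ≠ 0` for all `j`, the kernel of the secular matrix `A(y,η)`
has dimension at most `1`. -/
theorem ker_dim_le_one (N : ℕ) (hN : 2 ≤ N) (y : Fin N → ℂ) (η : ℂ)
    (hy : ∀ j, Complex.sin (y j) ≠ 0)
    (A : Matrix (Fin N) (Fin N) ℂ)
    (hA : ∀ i j : Fin N, A i j =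
      if (i : ℕ) + 1 < N then
        (if j = i then Complex.sin (y i)
         else if (j : ℕ) = (i : ℕ) + 1 then -Complex.sin (y j) else 0)
      else
        (if (j : ℕ) + 1 = N then Complex.cos (y j) + η * Complex.sin (y j)
         else Complex.cos (y j))) :
    Module.finrank ℂ (LinearMap.ker A.mulVecLin) ≤ 1 := by
  have : NeZero N := ⟨by omega⟩
  have key : ∀ x ∈ LinearMap.ker A.mulVecLin, x 0 = 0 → x = 0 := by
    intro x hx hx0
    have hker : A.mulVec x = 0 := LinearMap.mem_ker.mp hx
    have hrow : ∀ (i : Fin N) (hi : (i : ℕ) + 1 < N),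
        Complex.sin (y i) * x i
          = Complex.sin (y ⟨(i : ℕ) + 1, hi⟩) * x ⟨(i : ℕ) + 1, hi⟩ := by
      intro i hi
      set i' : Fin N := ⟨(i : ℕ) + 1, hi⟩ with hi'
      have hne : i' ≠ i := by
        simp [hi', Fin.ext_iff]
      have hAi : ∀ j, A i j = Complex.sin (y i) * (if j = i then 1 else 0)
          - Complex.sin (y i') * (if j = i' then 1 else 0) := by
        intro j
        rw [hA]
        by_cases h1 : j = i
        · subst h1
          simp [hi, hne.symm, hi', Fin.ext_iff]
        · by_cases h2 : j = i'
          · subst h2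
            simp [hi, h1, hi', Fin.ext_iff]
          · have h3 : (j : ℕ) ≠ (i : ℕ) + 1 := fun h => h2 (Fin.ext h)
            simp [hi, h1, h2, h3]
      have h0 : A.mulVec x i = 0 := congrFun hker i
      have hsum : A.mulVec x i
          = Complex.sin (y i) * x i - Complex.sin (y i') * x i' := by
        simp [Matrix.mulVec, dotProduct, hAi, sub_mul, Finset.sum_sub_distrib,
          ite_mul, mul_assoc, Finset.sum_ite_eq', sub_mul]
      rw [hsum] at h0
      linear_combination h0
    have hall : ∀ k (hk : k < N), x ⟨k, hk⟩ = 0 := by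
      intro k
      induction k with
      | zero => intro hk
                have h : (⟨0, hk⟩ : Fin N) = 0 := by
                  ext; simp
                rw [h]; exact hx0
      | succ k ih =>
        intro hk
        have hk' : k < N := Nat.lt_of_succ_lt hk
        have h := hrow ⟨k, hk'⟩ hk
        rw [ih hk'] at h
        have := h.symm
        rw [mul_zero] at this
        exact (mul_eq_zero.mp this).resolve_left (hy _)
    funext j
    have := hall j j.isLt
    simpa using this
  have hinj : Function.Injective
      ((LinearMap.proj (0 : Fin N) : (Fin N → ℂ) →ₗ[ℂ] ℂ).comp
        (LinearMap.ker A.mulVecLin).subtype) := by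
    intro a b hab
    apply Subtype.ext
    have hsub : (a : Fin N → ℂ) - b ∈ LinearMap.ker A.mulVecLin :=
      sub_mem a.2 b.2
    have h0 : ((a : Fin N → ℂ) - b) 0 = 0 := by
      have : (a : Fin N → ℂ) 0 = (b : Fin N → ℂ) 0 := hab
      simp [this]
    have := key _ hsub h0
    exact sub_eq_zero.mp this
  calc Module.finrank ℂ (LinearMap.ker A.mulVecLin)
      ≤ Module.finrank ℂ ℂ := LinearMap.finrank_le_finrank_of_injective hinj
    _ = 1 := Module.finrank_self ℂ
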